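/- Assume conditions (A1), (A2) and (A3). Define Φ(t) = exp(−∫_t^∞ F(c(s)) ds) for t > 0. Then Φ is well defined (the integral is finite), non-decreasing and differentiable on (0,∞) with Φ′(t) = F(c(t)) · Φ(t) for every t > 0, and lim_{t→∞} Φ(t) = 1. Consequently ∫₀^∞ F(c(t)) exp(−∫_t^∞ F(c(s)) ds) dt = 1 − exp(−∫₀^∞ F(c(s)) ds). (Probabilistically, Φ is the distribution function of the time A to the most recent common ancestor and f_A(t) = 1_{t>0} F(c(t)) Φ(t) is its density.) -/

import Mathlib

open MeasureTheory Real Set Filter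

/-- The (sub)-critical branching mechanism
`ψ(z) = b z + σ z² + ∫₀^∞ (e^{−z u} − 1 + z u) m(du)`. -/
noncomputable def psi (b σ : ℝ) (m : Measure ℝ) (z : ℝ) : ℝ :=
  b * z + σ * z ^ 2 + ∫ u in Ioi (0 : ℝ), (Real.exp (-(z * u)) - 1 + z * u) ∂m

/-- Condition (A3): either `σ > 0` or `∫₀^1 u m(du) = ∞`. -/
def condA3 (σ : ℝ) (m : Measure ℝ) : Prop :=
  0 < σ ∨ ∫⁻ u in Ioc (0 : ℝ) 1, ENNReal.ofReal u ∂m = ⊤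

/-- `v t λ ∈ (0, λ]` is the unique solution of `∫_{v_t(λ)}^{λ} dz/ψ(z) = t`
(the cumulant semigroup). -/
def IsCumulant (b σ : ℝ) (m : Measure ℝ) (v : ℝ → ℝ → ℝ) : Prop :=
  ∀ lam > (0 : ℝ), ∀ t ≥ (0 : ℝ),
    v t lam ∈ Ioc 0 lam ∧ ∫ z in (v t lam)..lam, (psi b σ m z)⁻¹ = t

/-- The immigration mechanism `F(z) = β z + ∫₀^∞ (1 − e^{−z u}) n(du)`. -/
noncomputable def Fim (β : ℝ) (n : Measure ℝ) (z : ℝ) : ℝ :=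
  β * z + ∫ u in Ioi (0 : ℝ), (1 - Real.exp (-(z * u))) ∂n

/-- Condition (A2): `∫₀^λ F(z)/ψ(z) dz < ∞` for some `λ > 0`. -/
def condA2 (b σ β : ℝ) (m n : Measure ℝ) : Prop :=
  ∃ lam > (0 : ℝ), IntegrableOn (fun z => Fim β n z / psi b σ m z) (Ioo 0 lam)

/-- Under (A1) and (A3), `c(t) ∈ (0,∞)` is defined by `∫_{c(t)}^∞ dz/ψ(z) = t`. -/
def IsExtinctionRate (b σ : ℝ) (m : Measure ℝ) (c : ℝ → ℝ) : Prop :=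
  ∀ t > (0 : ℝ), 0 < c t ∧ ∫ z in Ioi (c t), (psi b σ m z)⁻¹ = t

lemma exp_aux_nonneg (x : ℝ) : 0 ≤ Real.exp (-x) - 1 + x := by
  have := Real.add_one_le_exp (-x); linarith

lemma exp_aux_pos {x : ℝ} (hx : 0 < x) : 0 < Real.exp (-x) - 1 + x := by
  have := Real.add_one_lt_exp (x := -x) (by linarith); linarith

lemma exp_aux_le {x : ℝ} (hx : 0 ≤ x) : Real.exp (-x) - 1 + x ≤ min x (x ^ 2) := by
  have h1 : Real.exp (-x) - 1 + x ≤ x := by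
    have : Real.exp (-x) ≤ 1 := Real.exp_le_one_iff.2 (by linarith)
    linarith
  refine le_min h1 ?_
  rcases le_total x 1 with h | h
  · have h2 : |Real.exp (-x) - 1 - (-x)| ≤ (-x) ^ 2 :=
      Real.abs_exp_sub_one_sub_id_le (by rwa [abs_neg, abs_of_nonneg hx])
    have := (abs_le.1 h2).2
    nlinarith
  · nlinarith

lemma min_scale {z u : ℝ} (hz : 0 ≤ z) (hu : 0 ≤ u) :
    min (z * u) ((z * u) ^ 2) ≤ max z (z ^ 2) * min u (u ^ 2) := by
  rcases le_total u 1 with h | h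
  · have hmin : min u (u ^ 2) = u ^ 2 := min_eq_right (by nlinarith)
    rw [hmin]
    calc min (z * u) ((z * u) ^ 2) ≤ (z * u) ^ 2 := min_le_right _ _
      _ = z ^ 2 * u ^ 2 := by ring
      _ ≤ max z (z ^ 2) * u ^ 2 := by
          have := le_max_right z (z ^ 2); nlinarith [sq_nonneg u]
  · have hmin : min u (u ^ 2) = u := min_eq_left (by nlinarith)
    rw [hmin]
    calc min (z * u) ((z * u) ^ 2) ≤ z * u := min_le_left _ _
      _ ≤ max z (z ^ 2) * u := by
          have := le_max_left z (z ^ 2); nlinarith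

lemma psi_integrand_bound {z u : ℝ} (hz : 0 ≤ z) (hu : 0 ≤ u) :
    ‖Real.exp (-(z * u)) - 1 + z * u‖ ≤ max z (z ^ 2) * min u (u ^ 2) := by
  rw [Real.norm_eq_abs, abs_of_nonneg (exp_aux_nonneg _)]
  exact (exp_aux_le (mul_nonneg hz hu)).trans (min_scale hz hu)

lemma psi_integrand_integrable {m : Measure ℝ}
    (hm : IntegrableOn (fun u => min u (u ^ 2)) (Ioi 0) m) {z : ℝ} (hz : 0 ≤ z) :
    IntegrableOn (fun u => Real.exp (-(z * u)) - 1 + z * u) (Ioi 0) m := by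
  refine Integrable.mono' (hm.const_mul (max z (z ^ 2)))
    (Continuous.aestronglyMeasurable (by continuity)) ?_
  refine (ae_restrict_iff' measurableSet_Ioi).2 (ae_of_all _ fun u hu => ?_)
  exact psi_integrand_bound hz (le_of_lt hu)

lemma psi_nonneg {b σ : ℝ} {m : Measure ℝ} (hb : 0 ≤ b) (hσ : 0 ≤ σ) {z : ℝ} (hz : 0 ≤ z) :
    0 ≤ psi b σ m z :=
  add_nonneg (add_nonneg (mul_nonneg hb hz) (mul_nonneg hσ (sq_nonneg z)))
    (setIntegral_nonneg measurableSet_Ioi fun _ _ => exp_aux_nonneg _)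

lemma psi_pos {b σ : ℝ} {m : Measure ℝ} (hb : 0 ≤ b) (hσ : 0 ≤ σ)
    (hm : IntegrableOn (fun u => min u (u ^ 2)) (Ioi 0) m)
    (hA3 : 0 < σ ∨ ∫⁻ u in Ioc (0 : ℝ) 1, ENNReal.ofReal u ∂m = ⊤)
    {z : ℝ} (hz : 0 < z) : 0 < psi b σ m z := by
  have hbz : 0 ≤ b * z := mul_nonneg hb hz.le
  have hint : 0 ≤ ∫ u in Ioi (0:ℝ), (Real.exp (-(z * u)) - 1 + z * u) ∂m :=
    setIntegral_nonneg measurableSet_Ioi fun _ _ => exp_aux_nonneg _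
  rcases hA3 with hσpos | hmass
  · have : 0 < σ * z ^ 2 := by positivity
    unfold psi; linarith
  · have hm0 : m (Ioc (0:ℝ) 1) ≠ 0 := by
      intro h0
      rw [setLIntegral_measure_zero _ _ h0] at hmass
      exact ENNReal.zero_ne_top hmass
    have hpos : 0 < ∫ u in Ioi (0:ℝ), (Real.exp (-(z * u)) - 1 + z * u) ∂m := by
      rw [setIntegral_pos_iff_support_of_nonneg_ae
        ((ae_restrict_iff' measurableSet_Ioi).2 (ae_of_all _ fun u _ => exp_aux_nonneg _))
        (psi_integrand_integrable hm hz.le)]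
      refine lt_of_lt_of_le (pos_iff_ne_zero.2 hm0) (measure_mono ?_)
      intro u hu
      exact ⟨ne_of_gt (exp_aux_pos (mul_pos hz hu.1)), hu.1⟩
    have : 0 ≤ σ * z ^ 2 := mul_nonneg hσ (sq_nonneg z)
    unfold psi; linarith

lemma psi_continuousAt {b σ : ℝ} {m : Measure ℝ}
    (hm : IntegrableOn (fun u => min u (u ^ 2)) (Ioi 0) m)
    {z₀ : ℝ} (hz : 0 < z₀) : ContinuousAt (psi b σ m) z₀ := by
  have h1 : ContinuousAt (fun z : ℝ => b * z + σ * z ^ 2) z₀ := by fun_prop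
  have h2 : ContinuousAt
      (fun z : ℝ => ∫ u in Ioi (0:ℝ), (Real.exp (-(z * u)) - 1 + z * u) ∂m) z₀ := by
    set R : ℝ := z₀ + 1 with hR
    refine continuousAt_of_dominated (bound := fun u => max R (R ^ 2) * min u (u ^ 2))
      (Eventually.of_forall fun z => Continuous.aestronglyMeasurable (by continuity)) ?_
      (hm.const_mul _) (ae_of_all _ fun u => by fun_prop)
    have hmem : Ioo (0:ℝ) R ∈ nhds z₀ := Ioo_mem_nhds hz (by simp [hR])
    filter_upwards [hmem] with z hzz
    refine (ae_restrict_iff' measurableSet_Ioi).2 (ae_of_all _ fun u hu => ?_)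
    refine (psi_integrand_bound hzz.1.le hu.out.le).trans ?_
    have hmax : max z (z ^ 2) ≤ max R (R ^ 2) := by
      have h01 : z ≤ R := hzz.2.le
      have : z ^ 2 ≤ R ^ 2 := by nlinarith [hzz.1.le]
      exact max_le_max h01 this
    have hminn : 0 ≤ min u (u ^ 2) := le_min hu.out.le (sq_nonneg u)
    exact mul_le_mul_of_nonneg_right hmax hminn
  exact h1.add h2

lemma one_sub_exp_nonneg {x : ℝ} (hx : 0 ≤ x) : 0 ≤ 1 - Real.exp (-x) := by
  have : Real.exp (-x) ≤ 1 := Real.exp_le_one_iff.2 (by linarith)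
  linarith

lemma one_sub_exp_le {x : ℝ} (hx : 0 ≤ x) : 1 - Real.exp (-x) ≤ min 1 x := by
  have h1 : 1 - Real.exp (-x) ≤ 1 := by have := Real.exp_pos (-x); linarith
  have h2 : 1 - Real.exp (-x) ≤ x := by have := Real.add_one_le_exp (-x); linarith
  exact le_min h1 h2

lemma min_scale' {z u : ℝ} (hz : 0 ≤ z) (hu : 0 ≤ u) :
    min 1 (z * u) ≤ max 1 z * min 1 u := by
  rcases le_total u 1 with h | h
  · have hmin : min (1:ℝ) u = u := min_eq_right h
    rw [hmin]
    calc min 1 (z * u) ≤ z * u := min_le_right _ _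
      _ ≤ max 1 z * u := mul_le_mul_of_nonneg_right (le_max_right _ _) hu
  · have hmin : min (1:ℝ) u = 1 := min_eq_left h
    rw [hmin, mul_one]
    exact (min_le_left _ _).trans (le_max_left _ _)

lemma Fim_integrand_bound {z u : ℝ} (hz : 0 ≤ z) (hu : 0 ≤ u) :
    ‖1 - Real.exp (-(z * u))‖ ≤ max 1 z * min 1 u := by
  rw [Real.norm_eq_abs, abs_of_nonneg (one_sub_exp_nonneg (mul_nonneg hz hu))]
  exact (one_sub_exp_le (mul_nonneg hz hu)).trans (min_scale' hz hu)

lemma Fim_integrand_integrable {n : Measure ℝ}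
    (hn : IntegrableOn (fun u => min 1 u) (Ioi 0) n) {z : ℝ} (hz : 0 ≤ z) :
    IntegrableOn (fun u => 1 - Real.exp (-(z * u))) (Ioi 0) n := by
  refine Integrable.mono' (hn.const_mul (max 1 z))
    (Continuous.aestronglyMeasurable (by continuity)) ?_
  exact (ae_restrict_iff' measurableSet_Ioi).2
    (ae_of_all _ fun u hu => Fim_integrand_bound hz hu.out.le)

lemma Fim_nonneg {β : ℝ} {n : Measure ℝ} (hβ : 0 ≤ β) {z : ℝ} (hz : 0 ≤ z) :
    0 ≤ Fim β n z :=
  add_nonneg (mul_nonneg hβ hz)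
    (setIntegral_nonneg measurableSet_Ioi fun u hu =>
      one_sub_exp_nonneg (mul_nonneg hz hu.out.le))

lemma Fim_continuousAt {β : ℝ} {n : Measure ℝ}
    (hn : IntegrableOn (fun u => min 1 u) (Ioi 0) n)
    {z₀ : ℝ} (hz : 0 < z₀) : ContinuousAt (Fim β n) z₀ := by
  have h1 : ContinuousAt (fun z : ℝ => β * z) z₀ := by fun_prop
  have h2 : ContinuousAt
      (fun z : ℝ => ∫ u in Ioi (0:ℝ), (1 - Real.exp (-(z * u))) ∂n) z₀ := by
    set R : ℝ := z₀ + 1 with hR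
    refine continuousAt_of_dominated (bound := fun u => max 1 R * min 1 u)
      (Eventually.of_forall fun z => Continuous.aestronglyMeasurable (by continuity)) ?_
      (hn.const_mul _) (ae_of_all _ fun u => by fun_prop)
    have hmem : Ioo (0:ℝ) R ∈ nhds z₀ := Ioo_mem_nhds hz (by simp [hR])
    filter_upwards [hmem] with z hzz
    refine (ae_restrict_iff' measurableSet_Ioi).2 (ae_of_all _ fun u hu => ?_)
    refine (Fim_integrand_bound hzz.1.le hu.out.le).trans ?_
    exact mul_le_mul_of_nonneg_right (max_le_max le_rfl hzz.2.le)
      (le_min zero_le_one hu.out.le)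
  exact h1.add h2

section H
variable {b σ : ℝ} {m : Measure ℝ}
  (hb : 0 ≤ b) (hσ : 0 ≤ σ)
  (hm : IntegrableOn (fun u => min u (u ^ 2)) (Ioi 0) m)
  (hA1 : IntegrableOn (fun z => (psi b σ m z)⁻¹) (Ioi 1))
  (hA3 : 0 < σ ∨ ∫⁻ u in Ioc (0 : ℝ) 1, ENNReal.ofReal u ∂m = ⊤)

include hb hσ hm hA3

lemma psi_inv_contOn : ContinuousOn (fun z => (psi b σ m z)⁻¹) (Ioi 0) :=
  fun z hz => ((psi_continuousAt hm hz.out).inv₀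
    (psi_pos hb hσ hm hA3 hz.out).ne').continuousWithinAt

include hA1

lemma psi_inv_intOn {x : ℝ} (hx : 0 < x) :
    IntegrableOn (fun z => (psi b σ m z)⁻¹) (Ioi x) := by
  rcases le_total 1 x with h | h
  · exact hA1.mono_set (Ioi_subset_Ioi h)
  · rw [← Ioc_union_Ioi_eq_Ioi h]
    refine IntegrableOn.union ?_ hA1
    refine (ContinuousOn.integrableOn_Icc ?_).mono_set Ioc_subset_Icc_self
    exact (psi_inv_contOn hb hσ hm hA3).mono fun z hz => lt_of_lt_of_le hx hz.1

lemma psi_inv_intOn_Ioc {x y : ℝ} (hx : 0 < x) :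
    IntegrableOn (fun z => (psi b σ m z)⁻¹) (Ioc x y) :=
  (psi_inv_intOn hb hσ hm hA1 hA3 hx).mono_set Ioc_subset_Ioi_self

omit hA1

lemma setIntegral_psi_inv_Ioc_pos {x y : ℝ} (hx : 0 < x) (hxy : x < y)
    (hint : IntegrableOn (fun z => (psi b σ m z)⁻¹) (Ioc x y)) :
    0 < ∫ z in Ioc x y, (psi b σ m z)⁻¹ := by
  rw [setIntegral_pos_iff_support_of_nonneg_ae
    ((ae_restrict_iff' measurableSet_Ioc).2 (ae_of_all _ fun z hz =>
      inv_nonneg.2 (psi_nonneg hb hσ (hx.trans hz.1).le))) hint]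
  refine lt_of_lt_of_le (b := volume (Ioc x y)) ?_ (measure_mono ?_)
  · simp [Real.volume_Ioc, hxy]
  · intro z hz
    exact ⟨(inv_pos.2 (psi_pos hb hσ hm hA3 (hx.trans hz.1))).ne', hz⟩

include hA1

lemma H_split {x y : ℝ} (hx : 0 < x) (hxy : x ≤ y) :
    ∫ z in Ioi x, (psi b σ m z)⁻¹ =
      (∫ z in Ioc x y, (psi b σ m z)⁻¹) + ∫ z in Ioi y, (psi b σ m z)⁻¹ := by
  rw [← Ioc_union_Ioi_eq_Ioi hxy,
    setIntegral_union (Ioc_disjoint_Ioi le_rfl) measurableSet_Ioi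
      (psi_inv_intOn_Ioc hb hσ hm hA1 hA3 hx)
      (psi_inv_intOn hb hσ hm hA1 hA3 (hx.trans_le hxy))]

lemma H_pos {x : ℝ} (hx : 0 < x) : 0 < ∫ z in Ioi x, (psi b σ m z)⁻¹ := by
  rw [setIntegral_pos_iff_support_of_nonneg_ae
    ((ae_restrict_iff' measurableSet_Ioi).2 (ae_of_all _ fun z hz =>
      inv_nonneg.2 (psi_nonneg hb hσ (hx.trans hz.out).le)))
    (psi_inv_intOn hb hσ hm hA1 hA3 hx)]
  refine lt_of_lt_of_le (b := volume (Ioi x)) ?_ (measure_mono ?_)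
  · simp
  · intro z hz
    have hz' : x < z := hz
    exact ⟨(inv_pos.2 (psi_pos hb hσ hm hA3 (hx.trans hz'))).ne', hz'⟩

lemma H_anti {x y : ℝ} (hx : 0 < x) (hxy : x ≤ y) :
    ∫ z in Ioi y, (psi b σ m z)⁻¹ ≤ ∫ z in Ioi x, (psi b σ m z)⁻¹ := by
  rw [H_split hb hσ hm hA1 hA3 hx hxy]
  have h0 : 0 ≤ ∫ z in Ioc x y, (psi b σ m z)⁻¹ :=
    setIntegral_nonneg measurableSet_Ioc fun z hz =>
      inv_nonneg.2 (psi_nonneg hb hσ (hx.trans hz.1).le)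
  linarith

lemma H_strictAnti {x y : ℝ} (hx : 0 < x) (hxy : x < y) :
    ∫ z in Ioi y, (psi b σ m z)⁻¹ < ∫ z in Ioi x, (psi b σ m z)⁻¹ := by
  rw [H_split hb hσ hm hA1 hA3 hx hxy.le]
  have := setIntegral_psi_inv_Ioc_pos hb hσ hm hA3 hx hxy
    (psi_inv_intOn_Ioc hb hσ hm hA1 hA3 hx)
  linarith

lemma H_hasDerivAt {x : ℝ} (hx : 0 < x) :
    HasDerivAt (fun y => ∫ z in Ioi y, (psi b σ m z)⁻¹) (-(psi b σ m x)⁻¹) x := by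
  have key : ∀ y : ℝ, 0 < y →
      (∫ z in Ioi y, (psi b σ m z)⁻¹) =
        (∫ z in Ioi (1:ℝ), (psi b σ m z)⁻¹) - ∫ z in (1:ℝ)..y, (psi b σ m z)⁻¹ := by
    intro y hy
    rcases le_total y 1 with h | h
    · rw [intervalIntegral.integral_of_ge h, H_split hb hσ hm hA1 hA3 hy h]
      ring
    · rw [intervalIntegral.integral_of_le h, H_split hb hσ hm hA1 hA3 one_pos h]
      ring
  have hii : IntervalIntegrable (fun z => (psi b σ m z)⁻¹) volume 1 x := by
    refine ContinuousOn.intervalIntegrable ?_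
    refine (psi_inv_contOn hb hσ hm hA3).mono fun z hz => ?_
    have := hz.1
    exact lt_of_lt_of_le (lt_min one_pos hx) (by simpa [uIcc] using this)
  have hmeas : StronglyMeasurableAtFilter (fun z => (psi b σ m z)⁻¹) (nhds x) volume :=
    (psi_inv_contOn hb hσ hm hA3).stronglyMeasurableAtFilter isOpen_Ioi x hx
  have hcont : ContinuousAt (fun z => (psi b σ m z)⁻¹) x :=
    (psi_continuousAt hm hx).inv₀ (psi_pos hb hσ hm hA3 hx).ne'
  have hd := intervalIntegral.integral_hasDerivAt_right hii hmeas hcont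
  have hd2 : HasDerivAt
      (fun y => (∫ z in Ioi (1:ℝ), (psi b σ m z)⁻¹) - ∫ z in (1:ℝ)..y, (psi b σ m z)⁻¹)
      (-(psi b σ m x)⁻¹) x := by
    have h := (hasDerivAt_const x (∫ z in Ioi (1:ℝ), (psi b σ m z)⁻¹)).sub hd
    rw [zero_sub] at h
    exact h
  exact hd2.congr_of_eventuallyEq
    (by filter_upwards [Ioi_mem_nhds hx] with y hy; exact key y hy)
end H

section c
variable {b σ : ℝ} {m : Measure ℝ}
  (hb : 0 ≤ b) (hσ : 0 ≤ σ)
  (hm : IntegrableOn (fun u => min u (u ^ 2)) (Ioi 0) m)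
  (hA1 : IntegrableOn (fun z => (psi b σ m z)⁻¹) (Ioi 1))
  (hA3 : 0 < σ ∨ ∫⁻ u in Ioc (0 : ℝ) 1, ENNReal.ofReal u ∂m = ⊤)


variable {c : ℝ → ℝ}
  (hcpos : ∀ t, 0 < t → 0 < c t)
  (hcH : ∀ t, 0 < t → (∫ z in Ioi (c t), (psi b σ m z)⁻¹) = t)

include hb hσ hm hA1 hA3 hcpos hcH

lemma c_strictAnti {s t : ℝ} (hs : 0 < s) (hst : s < t) : c t < c s := by
  by_contra h
  push_neg at h
  have h2 := H_anti hb hσ hm hA1 hA3 (hcpos s hs) h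
  rw [hcH s hs, hcH t (hs.trans hst)] at h2
  linarith

lemma c_continuousAt {t : ℝ} (ht : 0 < t) : ContinuousAt c t := by
  rw [Metric.continuousAt_iff]
  intro ε hε
  set x₀ := c t with hx₀
  have hx₀pos : 0 < x₀ := hcpos t ht
  set ε' : ℝ := min (ε / 2) (x₀ / 2) with hε'
  have hε'pos : 0 < ε' := lt_min (by linarith) (by linarith)
  have hε'lt : ε' < x₀ := (min_le_right _ _).trans_lt (by linarith)
  have hsub : 0 < x₀ - ε' := by linarith
  have h1 : (∫ z in Ioi (x₀ + ε'), (psi b σ m z)⁻¹) < t := by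
    have := H_strictAnti hb hσ hm hA1 hA3 hx₀pos (by linarith : x₀ < x₀ + ε')
    rwa [hcH t ht] at this
  have h2 : t < ∫ z in Ioi (x₀ - ε'), (psi b σ m z)⁻¹ := by
    have := H_strictAnti hb hσ hm hA1 hA3 hsub (by linarith : x₀ - ε' < x₀)
    rwa [hcH t ht] at this
  refine ⟨min (t - ∫ z in Ioi (x₀ + ε'), (psi b σ m z)⁻¹)
    ((∫ z in Ioi (x₀ - ε'), (psi b σ m z)⁻¹) - t), lt_min (by linarith) (by linarith), ?_⟩
  intro y hy
  rw [Real.dist_eq] at hy ⊢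
  have hy1 : (∫ z in Ioi (x₀ + ε'), (psi b σ m z)⁻¹) < y := by
    have := abs_sub_lt_iff.1 hy
    have h3 := min_le_left (t - ∫ z in Ioi (x₀ + ε'), (psi b σ m z)⁻¹)
      ((∫ z in Ioi (x₀ - ε'), (psi b σ m z)⁻¹) - t)
    linarith [this.2]
  have hy2 : y < ∫ z in Ioi (x₀ - ε'), (psi b σ m z)⁻¹ := by
    have := abs_sub_lt_iff.1 hy
    have h3 := (min_le_right (t - ∫ z in Ioi (x₀ + ε'), (psi b σ m z)⁻¹)
      ((∫ z in Ioi (x₀ - ε'), (psi b σ m z)⁻¹) - t))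
    linarith [this.1]
  have hypos : 0 < y := by
    have h0 : 0 ≤ ∫ z in Ioi (x₀ + ε'), (psi b σ m z)⁻¹ :=
      setIntegral_nonneg measurableSet_Ioi fun z hz =>
        inv_nonneg.2 (psi_pos hb hσ hm hA3 ((by linarith : (0:ℝ) < x₀ + ε').trans hz)).le
    linarith
  have hclt : c y < x₀ + ε' := by
    by_contra h
    push_neg at h
    have := H_anti hb hσ hm hA1 hA3 (by linarith : (0:ℝ) < x₀ + ε') h
    rw [hcH y hypos] at this
    linarith
  have hcgt : x₀ - ε' < c y := by
    by_contra h
    push_neg at h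
    have := H_anti hb hσ hm hA1 hA3 (hcpos y hypos) h
    rw [hcH y hypos] at this
    linarith
  rw [abs_sub_lt_iff]
  constructor
  · have : ε' ≤ ε / 2 := min_le_left _ _
    linarith
  · have : ε' ≤ ε / 2 := min_le_left _ _
    linarith

lemma c_hasDerivAt {t : ℝ} (ht : 0 < t) : HasDerivAt c (-psi b σ m (c t)) t := by
  have hψ : 0 < psi b σ m (c t) := psi_pos hb hσ hm hA3 (hcpos t ht)
  have hd := HasDerivAt.of_local_left_inverse
    (c_continuousAt hb hσ hm hA1 hA3 hcpos hcH ht)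
    (H_hasDerivAt hb hσ hm hA1 hA3 (hcpos t ht))
    (neg_ne_zero.2 (inv_ne_zero hψ.ne'))
    (by filter_upwards [Ioi_mem_nhds ht] with y hy; exact hcH y hy)
  rw [inv_neg, inv_inv] at hd
  exact hd
end c

section sub
variable {b σ β : ℝ} {m n : Measure ℝ}
  (hb : 0 ≤ b) (hσ : 0 ≤ σ) (hβ : 0 ≤ β)
  (hm : IntegrableOn (fun u => min u (u ^ 2)) (Ioi 0) m)
  (hn : IntegrableOn (fun u => min 1 u) (Ioi 0) n)
  (hA3 : 0 < σ ∨ ∫⁻ u in Ioc (0 : ℝ) 1, ENNReal.ofReal u ∂m = ⊤)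
  {c : ℝ → ℝ}
  (hcpos : ∀ t, 0 < t → 0 < c t)
  (hcanti : ∀ s t : ℝ, 0 < s → s < t → c t < c s)
  (hcd : ∀ t : ℝ, 0 < t → HasDerivAt c (-psi b σ m (c t)) t)
  {lam : ℝ} (hlam : 0 < lam)
  (hA2 : IntegrableOn (fun z => Fim β n z / psi b σ m z) (Ioo 0 lam))

include hb hσ hm hn hA3

lemma FoverPsi_contOn :
    ContinuousOn (fun z => Fim β n z / psi b σ m z) (Ioi (0:ℝ)) := fun z hz =>
  (((Fim_continuousAt hn hz.out).div (psi_continuousAt hm hz.out)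
    (psi_pos hb hσ hm hA3 hz.out).ne')).continuousWithinAt

include hlam hA2

lemma FoverPsi_intOn {x : ℝ} (hx : 0 < x) :
    IntegrableOn (fun z => Fim β n z / psi b σ m z) (Ioc 0 x) := by
  have hsub : Ioc (0:ℝ) x ⊆ Ioo 0 lam ∪ Icc (lam/2) (max x lam) := by
    intro y hy
    rcases lt_or_ge y lam with h | h
    · exact Or.inl ⟨hy.1, h⟩
    · exact Or.inr ⟨by linarith, le_trans hy.2 (le_max_left _ _)⟩
  refine (IntegrableOn.union hA2 ?_).mono_set hsub
  refine ContinuousOn.integrableOn_Icc ?_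
  exact (FoverPsi_contOn hb hσ hm hn hA3).mono fun z hz => lt_of_lt_of_le (by linarith) hz.1

include hcpos hcanti hcd

lemma Fc_interval_sub {t T : ℝ} (ht : 0 < t) (htT : t ≤ T) :
    ∫ s in t..T, Fim β n (c s) =
      ∫ z in Ioc (c T) (c t), Fim β n z / psi b σ m z := by
  have huIcc : uIcc t T = Icc t T := uIcc_of_le htT
  have hmempos : ∀ x ∈ uIcc t T, 0 < x := by
    intro x hx; rw [huIcc] at hx; exact lt_of_lt_of_le ht hx.1
  have h1 : ∀ x ∈ uIcc t T, HasDerivAt c (-psi b σ m (c x)) x :=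
    fun x hx => hcd x (hmempos x hx)
  have h2 : ContinuousOn (fun x => -psi b σ m (c x)) (uIcc t T) := by
    intro x hx
    exact (((psi_continuousAt hm (hcpos x (hmempos x hx))).comp
      (hcd x (hmempos x hx)).continuousAt).neg).continuousWithinAt
  have h3 : ContinuousOn (fun z => -(Fim β n z / psi b σ m z)) (c '' uIcc t T) := by
    refine ((FoverPsi_contOn hb hσ hm hn hA3).neg).mono ?_
    rintro z ⟨x, hx, rfl⟩
    exact hcpos x (hmempos x hx)
  have hsub := intervalIntegral.integral_comp_smul_deriv' h1 h2 h3
  simp only [Function.comp_apply] at hsub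
  have hLHS : ∫ x in t..T, (-psi b σ m (c x)) • (fun z => -(Fim β n z / psi b σ m z)) (c x)
      = ∫ s in t..T, Fim β n (c s) := by
    refine intervalIntegral.integral_congr fun x hx => ?_
    have hψ : psi b σ m (c x) ≠ 0 := (psi_pos hb hσ hm hA3 (hcpos x (hmempos x hx))).ne'
    simp only [smul_eq_mul]
    field_simp
  have hcTt : c T ≤ c t := by
    rcases eq_or_lt_of_le htT with rfl | h
    · exact le_rfl
    · exact (hcanti t T ht h).le
  rw [hLHS] at hsub
  rw [hsub, intervalIntegral.integral_symm (c T) (c t), intervalIntegral.integral_neg, neg_neg,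
    intervalIntegral.integral_of_le hcTt]

omit hb hσ hm hA3 hcanti hlam hA2 in
lemma Fc_contOn : ContinuousOn (fun s => Fim β n (c s)) (Ioi (0:ℝ)) := by
  intro s hs
  exact ((Fim_continuousAt hn (hcpos s hs.out)).comp
    (hcd s hs.out).continuousAt).continuousWithinAt

omit hA3 hcanti hlam hA2 in
omit hb hσ hm in
lemma Fc_integrableOn_Ioc {t T : ℝ} (ht : 0 < t) :
    IntegrableOn (fun s => Fim β n (c s)) (Ioc t T) := by
  have : Ioc t T ⊆ Icc t (max t T) := fun y hy => ⟨hy.1.le, hy.2.trans (le_max_right _ _)⟩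
  refine (ContinuousOn.integrableOn_Icc ?_).mono_set this
  exact (Fc_contOn hn hcpos hcd).mono fun y hy => lt_of_lt_of_le ht hy.1

include hβ in
lemma Fc_integrableOn_Ioi {t : ℝ} (ht : 0 < t) :
    IntegrableOn (fun s => Fim β n (c s)) (Ioi t) := by
  refine integrableOn_Ioi_of_intervalIntegral_norm_bounded
    (∫ z in Ioc 0 (c t), Fim β n z / psi b σ m z) t
    (fun T : ℝ => Fc_integrableOn_Ioc hn hcpos hcd ht) tendsto_id ?_
  filter_upwards [eventually_ge_atTop t] with T hT
  simp only [id_eq]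
  have hnorm : ∫ s in t..T, ‖Fim β n (c s)‖ = ∫ s in t..T, Fim β n (c s) := by
    refine intervalIntegral.integral_congr fun x hx => ?_
    rw [uIcc_of_le hT] at hx
    exact Real.norm_of_nonneg (Fim_nonneg hβ (hcpos x (lt_of_lt_of_le ht hx.1)).le)
  rw [hnorm, Fc_interval_sub hb hσ hm hn hA3 hcpos hcanti hcd hlam hA2 ht hT]
  refine setIntegral_mono_set (FoverPsi_intOn hb hσ hm hn hA3 hlam hA2 (hcpos t ht)) ?_ ?_
  · refine (ae_restrict_iff' measurableSet_Ioc).2 (ae_of_all _ fun z hz => ?_)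
    exact div_nonneg (Fim_nonneg hβ hz.1.le) (psi_nonneg hb hσ hz.1.le)
  · refine HasSubset.Subset.eventuallyLE ?_
    intro z hz
    exact ⟨(hcpos T (lt_of_lt_of_le ht hT)).trans_le hz.1.le, hz.2⟩
end sub


lemma split_Ioi {f : ℝ → ℝ} {s t : ℝ} (hst : s ≤ t) (h : IntegrableOn f (Ioi s)) :
    ∫ x in Ioi s, f x = (∫ x in Ioc s t, f x) + ∫ x in Ioi t, f x := by
  rw [← Ioc_union_Ioi_eq_Ioi hst, setIntegral_union (Ioc_disjoint_Ioi le_rfl) measurableSet_Ioi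
    (h.mono_set Ioc_subset_Ioi_self) (h.mono_set (Ioi_subset_Ioi hst))]

theorem tmrca_distribution_function (b σ β : ℝ) (m n : Measure ℝ)
    (hb : 0 ≤ b) (hσ : 0 ≤ σ) (hβ : 0 ≤ β)
    (hm : IntegrableOn (fun u => min u (u ^ 2)) (Ioi 0) m)
    (hn : IntegrableOn (fun u => min 1 u) (Ioi 0) n)
    (hA1 : IntegrableOn (fun z => (psi b σ m z)⁻¹) (Ioi 1))
    (hA2 : condA2 b σ β m n) (hA3 : condA3 σ m)
    (c : ℝ → ℝ) (hc : IsExtinctionRate b σ m c) :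
    (∀ t > (0 : ℝ), IntegrableOn (fun s => Fim β n (c s)) (Ioi t)) ∧
    MonotoneOn (fun t => Real.exp (-(∫ s in Ioi t, Fim β n (c s)))) (Ioi 0) ∧
    (∀ t > (0 : ℝ),
      HasDerivAt (fun x => Real.exp (-(∫ s in Ioi x, Fim β n (c s))))
        (Fim β n (c t) * Real.exp (-(∫ s in Ioi t, Fim β n (c s)))) t) ∧
    Tendsto (fun t => Real.exp (-(∫ s in Ioi t, Fim β n (c s)))) atTop (nhds 1) ∧
    (IntegrableOn (fun s => Fim β n (c s)) (Ioi 0) →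
      ∫ t in Ioi (0 : ℝ),
          Fim β n (c t) * Real.exp (-(∫ s in Ioi t, Fim β n (c s))) =
        1 - Real.exp (-(∫ s in Ioi (0 : ℝ), Fim β n (c s)))) ∧
    (¬ IntegrableOn (fun s => Fim β n (c s)) (Ioi 0) →
      ∫ t in Ioi (0 : ℝ),
          Fim β n (c t) * Real.exp (-(∫ s in Ioi t, Fim β n (c s))) = 1) := by
  have hA3' : 0 < σ ∨ ∫⁻ u in Ioc (0 : ℝ) 1, ENNReal.ofReal u ∂m = ⊤ := hA3
  have hA2'' : ∃ lam > (0 : ℝ),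
      IntegrableOn (fun z => Fim β n z / psi b σ m z) (Ioo 0 lam) := hA2
  obtain ⟨lam, hlam, hA2'⟩ := hA2''
  have hc' : ∀ t > (0 : ℝ), 0 < c t ∧ ∫ z in Ioi (c t), (psi b σ m z)⁻¹ = t := hc
  have hcpos : ∀ t, 0 < t → 0 < c t := fun t ht => (hc' t ht).1
  have hcH : ∀ t, 0 < t → (∫ z in Ioi (c t), (psi b σ m z)⁻¹) = t := fun t ht => (hc' t ht).2
  have hcanti : ∀ s t : ℝ, 0 < s → s < t → c t < c s :=
    fun s t hs hst => c_strictAnti hb hσ hm hA1 hA3' hcpos hcH hs hst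
  have hcd : ∀ t : ℝ, 0 < t → HasDerivAt c (-psi b σ m (c t)) t :=
    fun t ht => c_hasDerivAt hb hσ hm hA1 hA3' hcpos hcH ht
  have part1 : ∀ t > (0:ℝ), IntegrableOn (fun s => Fim β n (c s)) (Ioi t) :=
    fun t ht => Fc_integrableOn_Ioi hb hσ hβ hm hn hA3' hcpos hcanti hcd hlam hA2' ht
  have hFcnn : ∀ s : ℝ, 0 < s → 0 ≤ Fim β n (c s) :=
    fun s hs => Fim_nonneg hβ (hcpos s hs).le
  have hGnn : ∀ t : ℝ, 0 ≤ t → 0 ≤ ∫ s in Ioi t, Fim β n (c s) :=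
    fun t ht => setIntegral_nonneg measurableSet_Ioi fun s hs => hFcnn s (lt_of_le_of_lt ht hs)
  have part2 : MonotoneOn (fun t => Real.exp (-(∫ s in Ioi t, Fim β n (c s)))) (Ioi 0) := by
    intro s hs t ht hst
    simp only
    rw [Real.exp_le_exp, neg_le_neg_iff]
    rw [split_Ioi hst (part1 s hs.out)]
    have h0 : 0 ≤ ∫ x in Ioc s t, Fim β n (c x) :=
      setIntegral_nonneg measurableSet_Ioc fun x hx => hFcnn x (hs.out.trans hx.1)
    linarith
  have hGd : ∀ t : ℝ, 0 < t →
      HasDerivAt (fun x => ∫ s in Ioi x, Fim β n (c s)) (-(Fim β n (c t))) t := by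
    intro t ht
    have hii : IntervalIntegrable (fun s => Fim β n (c s)) volume (t/2) t :=
      (intervalIntegrable_iff_integrableOn_Ioc_of_le (by linarith)).2
        (Fc_integrableOn_Ioc hn hcpos hcd (by linarith : (0:ℝ) < t/2))
    have hmeas : StronglyMeasurableAtFilter (fun s => Fim β n (c s)) (nhds t) volume :=
      (Fc_contOn hn hcpos hcd).stronglyMeasurableAtFilter isOpen_Ioi t ht
    have hca : ContinuousAt (fun s => Fim β n (c s)) t :=
      (Fim_continuousAt hn (hcpos t ht)).comp (hcd t ht).continuousAt
    have hd := intervalIntegral.integral_hasDerivAt_right hii hmeas hca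
    have hd2 : HasDerivAt
        (fun x => (∫ s in Ioi (t/2), Fim β n (c s)) - ∫ s in (t/2)..x, Fim β n (c s))
        (-(Fim β n (c t))) t := by
      have h := (hasDerivAt_const t (∫ s in Ioi (t/2), Fim β n (c s))).sub hd
      rw [zero_sub] at h
      exact h
    refine hd2.congr_of_eventuallyEq ?_
    filter_upwards [Ioi_mem_nhds (by linarith : t/2 < t)] with y hy
    have hy' : t/2 < y := hy
    rw [intervalIntegral.integral_of_le hy'.le, split_Ioi hy'.le (part1 (t/2) (by linarith))]
    ring
  have part3 : ∀ t > (0:ℝ), HasDerivAt (fun x => Real.exp (-(∫ s in Ioi x, Fim β n (c s))))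
      (Fim β n (c t) * Real.exp (-(∫ s in Ioi t, Fim β n (c s)))) t := by
    intro t ht
    have h := ((hGd t ht).neg).exp
    simpa [mul_comm] using h
  have part4 : Tendsto (fun t => Real.exp (-(∫ s in Ioi t, Fim β n (c s)))) atTop (nhds 1) := by
    have h1 : Tendsto (fun T => ∫ s in (1:ℝ)..T, Fim β n (c s)) atTop
        (nhds (∫ s in Ioi (1:ℝ), Fim β n (c s))) :=
      intervalIntegral_tendsto_integral_Ioi 1 (part1 1 one_pos) tendsto_id
    have h2 : Tendsto (fun t => ∫ s in Ioi t, Fim β n (c s)) atTop (nhds 0) := by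
      have h3 := tendsto_const_nhds (x := ∫ s in Ioi (1:ℝ), Fim β n (c s)) (f := atTop (α := ℝ)) |>.sub h1
      rw [sub_self] at h3
      refine Tendsto.congr' ?_ h3
      filter_upwards [eventually_ge_atTop (1:ℝ)] with T hT
      rw [intervalIntegral.integral_of_le hT, split_Ioi hT (part1 1 one_pos)]
      ring
    have h2n : Tendsto (fun t => -(∫ s in Ioi t, Fim β n (c s))) atTop (nhds 0) := by
      simpa using h2.neg
    have h4 := (Real.continuous_exp.tendsto 0).comp h2n
    rw [Real.exp_zero] at h4
    exact h4
  have hΦ'cont : ContinuousOn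
      (fun t => Fim β n (c t) * Real.exp (-(∫ s in Ioi t, Fim β n (c s)))) (Ioi 0) := by
    intro t ht
    exact (ContinuousAt.mul
      ((Fim_continuousAt hn (hcpos t ht.out)).comp (hcd t ht.out).continuousAt)
      (Real.continuous_exp.continuousAt.comp ((hGd t ht.out).continuousAt.neg))).continuousWithinAt
  have hexp_le : ∀ t : ℝ, 0 ≤ t → Real.exp (-(∫ s in Ioi t, Fim β n (c s))) ≤ 1 :=
    fun t ht => Real.exp_le_one_iff.2 (neg_nonpos.2 (hGnn t ht))
  have hΦ'nn : ∀ t : ℝ, 0 < t →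
      0 ≤ Fim β n (c t) * Real.exp (-(∫ s in Ioi t, Fim β n (c s))) :=
    fun t ht => mul_nonneg (hFcnn t ht) (Real.exp_pos _).le
  have hΦ'int : ∀ a : ℝ, 0 < a → IntegrableOn
      (fun t => Fim β n (c t) * Real.exp (-(∫ s in Ioi t, Fim β n (c s)))) (Ioi a) := by
    intro a ha
    refine Integrable.mono' (part1 a ha)
      ((hΦ'cont.mono (Ioi_subset_Ioi ha.le)).aestronglyMeasurable measurableSet_Ioi) ?_
    refine (ae_restrict_iff' measurableSet_Ioi).2 (ae_of_all _ fun t htt => ?_)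
    have h1 : 0 ≤ Fim β n (c t) := hFcnn t (ha.trans htt)
    have h2 := hexp_le t (ha.trans htt.out).le
    rw [Real.norm_eq_abs, abs_of_nonneg (mul_nonneg h1 (Real.exp_pos _).le)]
    calc Fim β n (c t) * Real.exp (-(∫ s in Ioi t, Fim β n (c s)))
        ≤ Fim β n (c t) * 1 := mul_le_mul_of_nonneg_left h2 h1
      _ = Fim β n (c t) := mul_one _
  have key2 : ∀ a : ℝ, 0 < a →
      (∫ t in Ioi a, Fim β n (c t) * Real.exp (-(∫ s in Ioi t, Fim β n (c s))))
        = 1 - Real.exp (-(∫ s in Ioi a, Fim β n (c s))) := by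
    intro a ha
    exact integral_Ioi_of_hasDerivAt_of_tendsto
      ((part3 a ha).continuousAt.continuousWithinAt)
      (fun x hx => part3 x (ha.trans hx))
      (hΦ'int a ha) part4
  set u : ℕ → ℝ := fun k => 1 / ((k : ℝ) + 1) with hu
  have hupos : ∀ k, 0 < u k := fun k => by positivity
  have hule : ∀ k, u k ≤ 1 := fun k => by
    rw [hu]
    rw [div_le_one (by positivity)]
    linarith [Nat.cast_nonneg (α := ℝ) k]
  have hu0 : Tendsto u atTop (nhds 0) := tendsto_one_div_add_atTop_nhds_zero_nat
  have humem : ∀ k, u k ∈ Icc (0:ℝ) 1 := fun k => ⟨(hupos k).le, hule k⟩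
  have hΦ'int01 : IntegrableOn
      (fun x => Fim β n (c x) * Real.exp (-(∫ s in Ioi x, Fim β n (c s)))) (Ioc 0 1) := by
    refine integrableOn_Ioc_of_intervalIntegral_norm_bounded_left (I := 1)
      (fun k => (hΦ'int (u k) (hupos k)).mono_set Ioc_subset_Ioi_self) hu0 ?_
    refine Eventually.of_forall fun k => ?_
    have hnorm : (∫ x in Ioc (u k) 1,
          ‖Fim β n (c x) * Real.exp (-(∫ s in Ioi x, Fim β n (c s)))‖)
        = ∫ x in Ioc (u k) 1, Fim β n (c x) * Real.exp (-(∫ s in Ioi x, Fim β n (c s))) := by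
      refine setIntegral_congr_fun measurableSet_Ioc fun x hx => ?_
      exact Real.norm_of_nonneg (hΦ'nn x ((hupos k).trans hx.1))
    rw [hnorm]
    have hsplit := split_Ioi (hule k) (hΦ'int (u k) (hupos k))
    have h1 := key2 (u k) (hupos k)
    have h2 := key2 1 one_pos
    have e1 : 0 < Real.exp (-(∫ s in Ioi (u k), Fim β n (c s))) := Real.exp_pos _
    have e2 := hexp_le 1 zero_le_one
    linarith
  have hΦ'int0 : IntegrableOn
      (fun x => Fim β n (c x) * Real.exp (-(∫ s in Ioi x, Fim β n (c s)))) (Ioi 0) := by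
    rw [← Ioc_union_Ioi_eq_Ioi zero_le_one]
    exact hΦ'int01.union (hΦ'int 1 one_pos)
  have hprim : Tendsto (fun k => ∫ x in Ioc 0 (u k),
      Fim β n (c x) * Real.exp (-(∫ s in Ioi x, Fim β n (c s)))) atTop (nhds 0) := by
    have hIcc : IntegrableOn
        (fun x => Fim β n (c x) * Real.exp (-(∫ s in Ioi x, Fim β n (c s)))) (Icc 0 1) :=
      (integrableOn_Icc_iff_integrableOn_Ioc enorm_ne_top).2 hΦ'int01
    have hcont := intervalIntegral.continuousOn_primitive (a := (0:ℝ)) (b := 1) hIcc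
    have h00 : (∫ x in Ioc (0:ℝ) 0,
        Fim β n (c x) * Real.exp (-(∫ s in Ioi x, Fim β n (c s)))) = 0 := by simp
    have htd := (hcont 0 (left_mem_Icc.2 zero_le_one)).tendsto
    rw [h00] at htd
    exact htd.comp (tendsto_nhdsWithin_of_tendsto_nhds_of_eventually_within u hu0
      (Eventually.of_forall humem))
  have htail : Tendsto (fun k => ∫ x in Ioi (u k),
      Fim β n (c x) * Real.exp (-(∫ s in Ioi x, Fim β n (c s)))) atTop
      (nhds (∫ x in Ioi (0:ℝ), Fim β n (c x) * Real.exp (-(∫ s in Ioi x, Fim β n (c s))))) := by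
    have h := (tendsto_const_nhds
      (x := ∫ x in Ioi (0:ℝ), Fim β n (c x) * Real.exp (-(∫ s in Ioi x, Fim β n (c s))))
      (f := atTop (α := ℕ))).sub hprim
    rw [sub_zero] at h
    refine h.congr fun k => ?_
    have := split_Ioi (hupos k).le hΦ'int0
    linarith
  have hΦlim : Tendsto (fun k => Real.exp (-(∫ s in Ioi (u k), Fim β n (c s)))) atTop
      (nhds (1 - ∫ x in Ioi (0:ℝ),
        Fim β n (c x) * Real.exp (-(∫ s in Ioi x, Fim β n (c s))))) := by
    have h := (tendsto_const_nhds (x := (1:ℝ)) (f := atTop (α := ℕ))).sub htail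
    refine h.congr fun k => ?_
    have := key2 (u k) (hupos k)
    linarith
  refine ⟨part1, part2, part3, part4, ?_, ?_⟩
  · intro hI
    have hIccF : IntegrableOn (fun s => Fim β n (c s)) (Icc 0 1) :=
      (integrableOn_Icc_iff_integrableOn_Ioc (by simp)).2 (hI.mono_set Ioc_subset_Ioi_self)
    have hprimF : Tendsto (fun k => ∫ x in Ioc 0 (u k), Fim β n (c x)) atTop (nhds 0) := by
      have hcont := intervalIntegral.continuousOn_primitive (a := (0:ℝ)) (b := 1) hIccF
      have h00 : (∫ x in Ioc (0:ℝ) 0, Fim β n (c x)) = 0 := by simp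
      have htd := (hcont 0 (left_mem_Icc.2 zero_le_one)).tendsto
      rw [h00] at htd
      exact htd.comp (tendsto_nhdsWithin_of_tendsto_nhds_of_eventually_within u hu0
        (Eventually.of_forall humem))
    have hGlim : Tendsto (fun k => ∫ s in Ioi (u k), Fim β n (c s)) atTop
        (nhds (∫ s in Ioi (0:ℝ), Fim β n (c s))) := by
      have h := (tendsto_const_nhds (x := ∫ s in Ioi (0:ℝ), Fim β n (c s))
        (f := atTop (α := ℕ))).sub hprimF
      rw [sub_zero] at h
      refine h.congr fun k => ?_
      have := split_Ioi (hupos k).le hI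
      linarith
    have h2 : Tendsto (fun k => Real.exp (-(∫ s in Ioi (u k), Fim β n (c s)))) atTop
        (nhds (Real.exp (-(∫ s in Ioi (0:ℝ), Fim β n (c s)))))  :=
      (Real.continuous_exp.tendsto _).comp hGlim.neg
    have hun := tendsto_nhds_unique hΦlim h2
    linarith
  · intro hI
    have hAmono : Monotone (fun k => ∫ x in Ioc (u k) 1, Fim β n (c x)) := by
      intro j k hjk
      have hukj : u k ≤ u j := by
        rw [hu]
        apply one_div_le_one_div_of_le (by positivity)
        exact_mod_cast add_le_add_left (Nat.cast_le.2 hjk) 1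
      refine setIntegral_mono_set ((part1 (u k) (hupos k)).mono_set Ioc_subset_Ioi_self) ?_
        (HasSubset.Subset.eventuallyLE (Ioc_subset_Ioc_left hukj))
      exact (ae_restrict_iff' measurableSet_Ioc).2
        (ae_of_all _ fun x hx => hFcnn x ((hupos k).trans hx.1))
    have hAunbdd : ¬ BddAbove (range fun k => ∫ x in Ioc (u k) 1, Fim β n (c x)) := by
      rintro ⟨M, hM⟩
      have hio : IntegrableOn (fun s => Fim β n (c s)) (Ioc 0 1) := by
        refine integrableOn_Ioc_of_intervalIntegral_norm_bounded_left (I := M)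
          (fun k => (part1 (u k) (hupos k)).mono_set Ioc_subset_Ioi_self) hu0 ?_
        refine Eventually.of_forall fun k => ?_
        have hnorm : (∫ x in Ioc (u k) 1, ‖Fim β n (c x)‖)
            = ∫ x in Ioc (u k) 1, Fim β n (c x) := by
          refine setIntegral_congr_fun measurableSet_Ioc fun x hx => ?_
          exact Real.norm_of_nonneg (hFcnn x ((hupos k).trans hx.1))
        rw [hnorm]
        exact hM (mem_range_self k)
      exact hI (by
        rw [← Ioc_union_Ioi_eq_Ioi zero_le_one]
        exact hio.union (part1 1 one_pos))
    have hA : Tendsto (fun k => ∫ x in Ioc (u k) 1, Fim β n (c x)) atTop atTop :=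
      tendsto_atTop_atTop_of_monotone' hAmono hAunbdd
    have hGtop : Tendsto (fun k => ∫ s in Ioi (u k), Fim β n (c s)) atTop atTop := by
      refine tendsto_atTop_mono (fun k => ?_) hA
      have hsp := split_Ioi (hule k) (part1 (u k) (hupos k))
      have h0 := hGnn 1 zero_le_one
      linarith
    have hexp0 : Tendsto (fun k => Real.exp (-(∫ s in Ioi (u k), Fim β n (c s)))) atTop
        (nhds 0) :=
      Real.tendsto_exp_atBot.comp (tendsto_neg_atBot_iff.2 hGtop)
    have hun := tendsto_nhds_unique hΦlim hexp0
    linarith
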